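/- The Grassmannian bracket algebra G(S) on a set S of |S| = m ≥ 3 symbols, generated by brackets [s,t] subject to antisymmetry and the Plücker relations, embeds into the Laurent ring k[E_T, D_T^{−1}] determined by any triangulation T of the convex m-gon with vertices S: every bracket [s,t] is a Laurent polynomial in the 2m−3 brackets corresponding to edges and diagonals of T, with denominator a monomial in the m−3 diagonal brackets. -/
import Mathlib

open Finset MvPolynomial

noncomputable def br {k : Type*} [CommRing k] {m : ℕ} (s t : Fin m) :
    MvPolynomial (Fin m × Fin 2) k :=
  X (s, 0) * X (t, 1) - X (t, 0) * X (s, 1)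

/-- Crossing of chords (a,b) and (c,d) of a polygon, vertices in linear order. -/
def XC (a b c d : ℕ) : Prop := (a < c ∧ c < b ∧ b < d) ∨ (c < a ∧ a < d ∧ d < b)

instance (a b c d : ℕ) : Decidable (XC a b c d) := by unfold XC; infer_instance

lemma plucker {k : Type*} [CommRing k] {m : ℕ} (a b c d : Fin m) :
    (br a c : MvPolynomial (Fin m × Fin 2) k) * br b d
      = br a b * br c d + br a d * br b c := by
  unfold br; ring

lemma br_anti {k : Type*} [CommRing k] {m : ℕ} (a b : Fin m) :
    (br a b : MvPolynomial (Fin m × Fin 2) k) = - br b a := by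
  unfold br; ring

lemma br_self {k : Type*} [CommRing k] {m : ℕ} (a : Fin m) :
    (br a a : MvPolynomial (Fin m × Fin 2) k) = 0 := by
  unfold br; ring

/-- A set of pairwise non-crossing diagonals of a convex `n`-gon has at most `n-3`
elements. -/
lemma count_le : ∀ n : ℕ, 3 ≤ n → ∀ F : Finset (ℕ × ℕ),
    (∀ p ∈ F, p.1 + 2 ≤ p.2 ∧ p.2 ≤ n - 1 ∧ ¬(p.1 = 0 ∧ p.2 = n - 1)) →
    (∀ p ∈ F, ∀ q ∈ F, ¬ XC p.1 p.2 q.1 q.2) →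
    F.card ≤ n - 3 := by
  intro n
  induction n using Nat.strong_induction_on with
  | _ n IH =>
    intro hn F hd hx
    rcases F.eq_empty_or_nonempty with h | ⟨⟨a, b⟩, hab⟩
    · simp [h]
    obtain ⟨ha1, ha2, ha3⟩ := hd _ hab
    set F' := F.erase (a, b) with hF'
    have hmemF' : ∀ p ∈ F', p ∈ F ∧ ¬(p.1 = a ∧ p.2 = b) := by
      intro p hp
      rw [hF', Finset.mem_erase] at hp
      refine ⟨hp.2, fun h => hp.1 ?_⟩
      exact Prod.ext h.1 h.2
    have hsplit : (F'.filter (fun p => a ≤ p.1 ∧ p.2 ≤ b)).card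
        + (F'.filter (fun p => ¬(a ≤ p.1 ∧ p.2 ≤ b))).card = F'.card :=
      Finset.card_filter_add_card_filter_not _
    -- inside part
    have hin : (F'.filter (fun p => a ≤ p.1 ∧ p.2 ≤ b)).card ≤ (b - a + 1) - 3 := by
      set G := F'.filter (fun p => a ≤ p.1 ∧ p.2 ≤ b) with hG
      have hmemG : ∀ p ∈ G, p ∈ F ∧ ¬(p.1 = a ∧ p.2 = b) ∧ a ≤ p.1 ∧ p.2 ≤ b := by
        intro p hp
        rw [hG, Finset.mem_filter] at hp
        exact ⟨(hmemF' p hp.1).1, (hmemF' p hp.1).2, hp.2⟩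
      have hinj : Set.InjOn (fun p : ℕ × ℕ => (p.1 - a, p.2 - a)) G := by
        intro p hp q hq h
        obtain ⟨hpF, -, hpa, -⟩ := hmemG p hp
        obtain ⟨hqF, -, hqa, -⟩ := hmemG q hq
        obtain ⟨hp1, -, -⟩ := hd p hpF
        obtain ⟨hq1, -, -⟩ := hd q hqF
        simp only [Prod.mk.injEq] at h
        rw [Prod.ext_iff]
        omega
      rw [← Finset.card_image_of_injOn hinj]
      apply IH (b - a + 1) (by omega) (by omega)
      · intro p' hp'
        simp only [Finset.mem_image] at hp'
        obtain ⟨p, hp, rfl⟩ := hp'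
        obtain ⟨hpF, hpab, hpa, hpb⟩ := hmemG p hp
        obtain ⟨hp1, hp2, hp3⟩ := hd p hpF
        refine ⟨by omega, by omega, by omega⟩
      · intro p' hp' q' hq'
        simp only [Finset.mem_image] at hp' hq'
        obtain ⟨p, hp, rfl⟩ := hp'
        obtain ⟨q, hq, rfl⟩ := hq'
        obtain ⟨hpF, -, hpa, hpb⟩ := hmemG p hp
        obtain ⟨hqF, -, hqa, hqb⟩ := hmemG q hq
        obtain ⟨hp1, -, -⟩ := hd p hpF
        obtain ⟨hq1, -, -⟩ := hd q hqF
        have h9 := hx p hpF q hqF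
        simp only [XC] at h9 ⊢
        omega
    -- outside part
    have hout : (F'.filter (fun p => ¬(a ≤ p.1 ∧ p.2 ≤ b))).card ≤ (n + a + 1 - b) - 3 := by
      set G := F'.filter (fun p => ¬(a ≤ p.1 ∧ p.2 ≤ b)) with hG
      have hmemG : ∀ p ∈ G, p ∈ F ∧ ¬(p.1 = a ∧ p.2 = b)
          ∧ (p.1 ≤ a ∨ b ≤ p.1) ∧ (p.2 ≤ a ∨ b ≤ p.2) ∧ ¬(p.1 < a ∧ a < p.2 ∧ p.2 < b)
          ∧ ¬(a < p.1 ∧ p.1 < b) := by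
        intro p hp
        rw [hG, Finset.mem_filter] at hp
        obtain ⟨hpF, hpne⟩ := hmemF' p hp.1
        have hnx := hx p hpF (a, b) hab
        obtain ⟨hp1, hp2, hp3⟩ := hd p hpF
        simp only [XC] at hnx
        have hns := hp.2
        refine ⟨hpF, hpne, by omega, by omega, by omega, by omega⟩
      set f : ℕ → ℕ := fun v => if v < b then v else v + a + 1 - b with hf
      have hfspec : ∀ v : ℕ, v ≤ a ∨ b ≤ v →
          (v ≤ a ∧ f v = v) ∨ (b ≤ v ∧ f v = v + a + 1 - b) := by
        intro v hv
        rw [hf]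
        dsimp only
        split_ifs <;> omega
      have hinj : Set.InjOn (fun p : ℕ × ℕ => (f p.1, f p.2)) G := by
        intro p hp q hq h
        obtain ⟨hpF, -, hpa, hpb, -, -⟩ := hmemG p hp
        obtain ⟨hqF, -, hqa, hqb, -, -⟩ := hmemG q hq
        simp only [Prod.mk.injEq] at h
        rcases hfspec p.1 hpa with ⟨h1, e1⟩ | ⟨h1, e1⟩ <;>
        rcases hfspec p.2 hpb with ⟨h2, e2⟩ | ⟨h2, e2⟩ <;>
        rcases hfspec q.1 hqa with ⟨h3, e3⟩ | ⟨h3, e3⟩ <;>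
        rcases hfspec q.2 hqb with ⟨h4, e4⟩ | ⟨h4, e4⟩ <;>
        · rw [Prod.ext_iff]; omega
      rw [← Finset.card_image_of_injOn hinj]
      apply IH (n + a + 1 - b) (by omega) (by omega)
      · intro p' hp'
        simp only [Finset.mem_image] at hp'
        obtain ⟨p, hp, rfl⟩ := hp'
        obtain ⟨hpF, hpne, hpa, hpb, -, -⟩ := hmemG p hp
        obtain ⟨hp1, hp2, hp3⟩ := hd p hpF
        rcases hfspec p.1 hpa with ⟨h1, e1⟩ | ⟨h1, e1⟩ <;>
        rcases hfspec p.2 hpb with ⟨h2, e2⟩ | ⟨h2, e2⟩ <;>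
        · refine ⟨by omega, by omega, by omega⟩
      · intro p' hp' q' hq'
        simp only [Finset.mem_image] at hp' hq'
        obtain ⟨p, hp, rfl⟩ := hp'
        obtain ⟨q, hq, rfl⟩ := hq'
        obtain ⟨hpF, -, hpa, hpb, -, -⟩ := hmemG p hp
        obtain ⟨hqF, -, hqa, hqb, -, -⟩ := hmemG q hq
        obtain ⟨hp1, -, -⟩ := hd p hpF
        obtain ⟨hq1, -, -⟩ := hd q hqF
        have h9 := hx p hpF q hqF
        simp only [XC] at h9 ⊢
        rcases hfspec p.1 hpa with ⟨h1, e1⟩ | ⟨h1, e1⟩ <;>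
        rcases hfspec p.2 hpb with ⟨h2, e2⟩ | ⟨h2, e2⟩ <;>
        rcases hfspec q.1 hqa with ⟨h3, e3⟩ | ⟨h3, e3⟩ <;>
        rcases hfspec q.2 hqb with ⟨h4, e4⟩ | ⟨h4, e4⟩ <;>
        · omega
    have hcard1 : F.card = F'.card + 1 := by
      rw [hF', Finset.card_erase_of_mem hab]
      have : 0 < F.card := Finset.card_pos.mpr ⟨_, hab⟩
      omega
    omega

lemma exists_cross (m' : ℕ) (D : Finset (Fin (m' + 3) × Fin (m' + 3)))
    (hcard : D.card = m')
    (hdiag : ∀ p ∈ D, (p.1 : ℕ) + 2 ≤ (p.2 : ℕ) ∧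
      ¬((p.1 : ℕ) = 0 ∧ (p.2 : ℕ) = m' + 2))
    (hnc : ∀ p ∈ D, ∀ q ∈ D,
      ¬((p.1 < q.1 ∧ q.1 < p.2 ∧ p.2 < q.2) ∨ (q.1 < p.1 ∧ p.1 < q.2 ∧ q.2 < p.2)))
    (s t : Fin (m' + 3)) (hst : (s : ℕ) + 2 ≤ (t : ℕ))
    (hfull : ¬((s : ℕ) = 0 ∧ (t : ℕ) = m' + 2)) (hmem : (s, t) ∉ D) :
    ∃ d ∈ D, XC (s : ℕ) (t : ℕ) (d.1 : ℕ) (d.2 : ℕ) := by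
  by_contra hno
  push_neg at hno
  set F : Finset (ℕ × ℕ) := D.image (fun d => ((d.1 : ℕ), (d.2 : ℕ))) with hF
  have hinj : Set.InjOn (fun d : Fin (m' + 3) × Fin (m' + 3) => ((d.1 : ℕ), (d.2 : ℕ))) D := by
    intro p hp q hq h
    simp only [Prod.mk.injEq] at h
    exact Prod.ext (Fin.ext h.1) (Fin.ext h.2)
  have hFcard : F.card = m' := by rw [hF, Finset.card_image_of_injOn hinj, hcard]
  have hstF : ((s : ℕ), (t : ℕ)) ∉ F := by
    rw [hF]
    simp only [Finset.mem_image, Prod.mk.injEq, not_exists]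
    rintro d ⟨hd, h1, h2⟩
    have hdst : d = (s, t) := Prod.ext (Fin.ext h1) (Fin.ext h2)
    exact hmem (hdst ▸ hd)
  have hFd : ∀ p ∈ F, p.1 + 2 ≤ p.2 ∧ p.2 ≤ (m' + 3) - 1 ∧ ¬(p.1 = 0 ∧ p.2 = (m' + 3) - 1) := by
    intro p hp
    rw [hF] at hp
    simp only [Finset.mem_image] at hp
    obtain ⟨d, hd, rfl⟩ := hp
    obtain ⟨h1, h2⟩ := hdiag d hd
    have := d.2.isLt
    exact ⟨h1, by omega, by simpa using h2⟩
  have hFx : ∀ p ∈ F, ∀ q ∈ F, ¬ XC p.1 p.2 q.1 q.2 := by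
    intro p hp q hq
    rw [hF] at hp hq
    simp only [Finset.mem_image] at hp hq
    obtain ⟨d, hd, rfl⟩ := hp
    obtain ⟨e, he, rfl⟩ := hq
    have := hnc d hd e he
    simp only [XC]
    simp only [Fin.lt_def] at this
    exact this
  -- add (s,t)
  have hd2 : ∀ p ∈ insert ((s : ℕ), (t : ℕ)) F,
      p.1 + 2 ≤ p.2 ∧ p.2 ≤ (m' + 3) - 1 ∧ ¬(p.1 = 0 ∧ p.2 = (m' + 3) - 1) := by
    intro p hp
    rcases Finset.mem_insert.mp hp with rfl | hp
    · have := t.isLt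
      exact ⟨hst, by omega, by simpa using hfull⟩
    · exact hFd p hp
  have hx2 : ∀ p ∈ insert ((s : ℕ), (t : ℕ)) F, ∀ q ∈ insert ((s : ℕ), (t : ℕ)) F,
      ¬ XC p.1 p.2 q.1 q.2 := by
    intro p hp q hq
    rcases Finset.mem_insert.mp hp with rfl | hp <;>
    rcases Finset.mem_insert.mp hq with rfl | hq
    · simp only [XC]; omega
    · rw [hF] at hq
      simp only [Finset.mem_image] at hq
      obtain ⟨e, he, rfl⟩ := hq
      exact hno e he
    · rw [hF] at hp
      simp only [Finset.mem_image] at hp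
      obtain ⟨e, he, rfl⟩ := hp
      have := hno e he
      simp only [XC] at this ⊢
      omega
    · exact hFx p hp q hq
  have := count_le (m' + 3) (by omega) _ hd2 hx2
  rw [Finset.card_insert_of_notMem hstF, hFcard] at this
  omega

lemma key {k : Type*} [Field k] (m' : ℕ)
    (D : Finset (Fin (m' + 3) × Fin (m' + 3)))
    (hcard : D.card = m')
    (hdiag : ∀ p ∈ D, (p.1 : ℕ) + 2 ≤ (p.2 : ℕ) ∧
      ¬((p.1 : ℕ) = 0 ∧ (p.2 : ℕ) = m' + 2))
    (hnc : ∀ p ∈ D, ∀ q ∈ D,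
      ¬((p.1 < q.1 ∧ q.1 < p.2 ∧ p.2 < q.2) ∨ (q.1 < p.1 ∧ p.1 < q.2 ∧ q.2 < p.2))) :
    ∀ c : ℕ, ∀ s t : Fin (m' + 3), (s : ℕ) < (t : ℕ) →
      (D.filter (fun e => XC (s : ℕ) (t : ℕ) (e.1 : ℕ) (e.2 : ℕ))).card = c →
      ∃ M : Fin (m' + 3) × Fin (m' + 3) → ℕ,
      (br s t : MvPolynomial (Fin (m' + 3) × Fin 2) k) * ∏ d ∈ D, br d.1 d.2 ^ M d ∈
        Algebra.adjoin k
          (({x | ∃ i : Fin (m' + 3), x = br i (i + 1)} ∪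
            {x | ∃ d ∈ D, x = br d.1 d.2} :
            Set (MvPolynomial (Fin (m' + 3) × Fin 2) k))) := by
  intro c
  induction c using Nat.strong_induction_on with
  | _ c IH =>
  intro s t hlt hc
  set A := Algebra.adjoin k
          (({x | ∃ i : Fin (m' + 3), x = br i (i + 1)} ∪
            {x | ∃ d ∈ D, x = br d.1 d.2} :
            Set (MvPolynomial (Fin (m' + 3) × Fin 2) k))) with hA
  have hedge : ∀ i : Fin (m' + 3), (br i (i + 1) : MvPolynomial (Fin (m' + 3) × Fin 2) k) ∈ A :=
    fun i => Algebra.subset_adjoin (Or.inl ⟨i, rfl⟩)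
  have hdm : ∀ d ∈ D, (br d.1 d.2 : MvPolynomial (Fin (m' + 3) × Fin 2) k) ∈ A :=
    fun d hd => Algebra.subset_adjoin (Or.inr ⟨d, hd, rfl⟩)
  have hprodm : ∀ M : Fin (m' + 3) × Fin (m' + 3) → ℕ,
      (∏ d ∈ D, br d.1 d.2 ^ M d : MvPolynomial (Fin (m' + 3) × Fin 2) k) ∈ A :=
    fun M => prod_mem fun d hd => pow_mem (hdm d hd) _
  by_cases h1 : (t : ℕ) = (s : ℕ) + 1
  · refine ⟨fun _ => 0, ?_⟩
    simp only [pow_zero, Finset.prod_const_one, mul_one]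
    have hts : t = s + 1 := by
      apply Fin.ext
      rw [Fin.val_add_one_of_lt]
      · exact h1
      · rw [Fin.lt_def, Fin.val_last]
        have := t.isLt
        omega
    rw [hts]
    exact hedge s
  by_cases h2 : (s : ℕ) = 0 ∧ (t : ℕ) = m' + 2
  · refine ⟨fun _ => 0, ?_⟩
    simp only [pow_zero, Finset.prod_const_one, mul_one]
    have h0 : ((t + 1 : Fin (m' + 3)) : ℕ) = (s : ℕ) := by
      rw [Fin.val_add]
      have hv1 : ((1 : Fin (m' + 3)) : ℕ) = 1 := rfl
      rw [hv1, show (t : ℕ) + 1 = m' + 3 by omega, Nat.mod_self]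
      omega
    have hts : t + 1 = s := Fin.ext h0
    have hmem := hedge t
    rw [hts] at hmem
    rw [br_anti s t]
    exact neg_mem hmem
  by_cases h3 : (s, t) ∈ D
  · refine ⟨fun _ => 0, ?_⟩
    simp only [pow_zero, Finset.prod_const_one, mul_one]
    exact hdm (s, t) h3
  -- main recursive case
  have hst2 : (s : ℕ) + 2 ≤ (t : ℕ) := by omega
  obtain ⟨d0, hd0, hxd0⟩ := exists_cross m' D hcard hdiag hnc s t hst2 h2 h3
  set p := d0.1 with hp
  set q := d0.2 with hq
  have hpq : (p : ℕ) + 2 ≤ (q : ℕ) := (hdiag d0 hd0).1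
  have hc1 : d0 ∈ D.filter (fun e => XC (s : ℕ) (t : ℕ) (e.1 : ℕ) (e.2 : ℕ)) :=
    Finset.mem_filter.mpr ⟨hd0, hxd0⟩
  have hcpos : 1 ≤ c := by
    rw [← hc]
    exact Finset.card_pos.mpr ⟨_, hc1⟩
  -- the recursion for a child chord
  have hchild : ∀ u v : Fin (m' + 3), (u : ℕ) < (v : ℕ) →
      (∀ x y : ℕ, x + 2 ≤ y → ¬ XC x y (p : ℕ) (q : ℕ) →
        XC (u : ℕ) (v : ℕ) x y → XC (s : ℕ) (t : ℕ) x y) →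
      ¬ XC (u : ℕ) (v : ℕ) (p : ℕ) (q : ℕ) →
      ∃ M : Fin (m' + 3) × Fin (m' + 3) → ℕ,
        (br u v : MvPolynomial (Fin (m' + 3) × Fin 2) k) * ∏ d ∈ D, br d.1 d.2 ^ M d ∈ A := by
    intro u v huv himp hnx
    have hsubs : D.filter (fun e => XC (u : ℕ) (v : ℕ) (e.1 : ℕ) (e.2 : ℕ))
        ⊆ (D.filter (fun e => XC (s : ℕ) (t : ℕ) (e.1 : ℕ) (e.2 : ℕ))).erase d0 := by
      intro e he
      rw [Finset.mem_filter] at he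
      rw [Finset.mem_erase, Finset.mem_filter]
      have hnpq : ¬ XC (e.1 : ℕ) (e.2 : ℕ) (p : ℕ) (q : ℕ) := by
        have := hnc e he.1 d0 hd0
        simp only [Fin.lt_def] at this
        simpa [XC] using this
      refine ⟨?_, he.1, himp (e.1 : ℕ) (e.2 : ℕ) (hdiag e he.1).1 hnpq he.2⟩
      rintro rfl
      exact hnx he.2
    have hlt2 : (D.filter (fun e => XC (u : ℕ) (v : ℕ) (e.1 : ℕ) (e.2 : ℕ))).card < c := by
      have hle := Finset.card_le_card hsubs
      rw [Finset.card_erase_of_mem hc1, hc] at hle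
      omega
    exact IH _ hlt2 u v huv rfl
  -- combining four children
  have hmul : ∀ (x y : MvPolynomial (Fin (m' + 3) × Fin 2) k)
      (Ma Mb : Fin (m' + 3) × Fin (m' + 3) → ℕ),
      x * ∏ d ∈ D, br d.1 d.2 ^ Ma d ∈ A → y * ∏ d ∈ D, br d.1 d.2 ^ Mb d ∈ A →
      x * y * ∏ d ∈ D, br d.1 d.2 ^ (Ma d + Mb d) ∈ A := by
    intro x y Ma Mb hx hy
    have heq : x * y * ∏ d ∈ D, br d.1 d.2 ^ (Ma d + Mb d)
        = (x * ∏ d ∈ D, br d.1 d.2 ^ Ma d) * (y * ∏ d ∈ D, br d.1 d.2 ^ Mb d) := by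
      simp only [pow_add, Finset.prod_mul_distrib]
      ring
    rw [heq]
    exact mul_mem hx hy
  have hbump : ∀ (x : MvPolynomial (Fin (m' + 3) × Fin 2) k)
      (Ma Mb : Fin (m' + 3) × Fin (m' + 3) → ℕ), (∀ d, Ma d ≤ Mb d) →
      x * ∏ d ∈ D, br d.1 d.2 ^ Ma d ∈ A → x * ∏ d ∈ D, br d.1 d.2 ^ Mb d ∈ A := by
    intro x Ma Mb hle hx
    have heq : (∏ d ∈ D, br d.1 d.2 ^ Mb d : MvPolynomial (Fin (m' + 3) × Fin 2) k)
        = (∏ d ∈ D, br d.1 d.2 ^ Ma d) * ∏ d ∈ D, br d.1 d.2 ^ (Mb d - Ma d) := by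
      rw [← Finset.prod_mul_distrib]
      refine Finset.prod_congr rfl fun d _ => ?_
      rw [← pow_add]
      congr 1
      have := hle d
      omega
    rw [heq, ← mul_assoc]
    exact mul_mem hx (hprodm _)
  have hfin : ∀ (x1 x2 x3 x4 : MvPolynomial (Fin (m' + 3) × Fin 2) k)
      (M1 M2 M3 M4 : Fin (m' + 3) × Fin (m' + 3) → ℕ),
      (br s t : MvPolynomial (Fin (m' + 3) × Fin 2) k) * br p q = x1 * x2 + x3 * x4 →
      x1 * ∏ d ∈ D, br d.1 d.2 ^ M1 d ∈ A → x2 * ∏ d ∈ D, br d.1 d.2 ^ M2 d ∈ A →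
      x3 * ∏ d ∈ D, br d.1 d.2 ^ M3 d ∈ A → x4 * ∏ d ∈ D, br d.1 d.2 ^ M4 d ∈ A →
      ∃ M : Fin (m' + 3) × Fin (m' + 3) → ℕ,
        (br s t : MvPolynomial (Fin (m' + 3) × Fin 2) k) * ∏ d ∈ D, br d.1 d.2 ^ M d ∈ A := by
    intro x1 x2 x3 x4 M1 M2 M3 M4 hpl hx1 hx2 hx3 hx4
    set N : Fin (m' + 3) × Fin (m' + 3) → ℕ := fun d => max (M1 d + M2 d) (M3 d + M4 d) with hN
    have k1 : x1 * x2 * ∏ d ∈ D, br d.1 d.2 ^ N d ∈ A :=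
      hbump _ _ _ (fun d => le_max_left _ _) (hmul _ _ _ _ hx1 hx2)
    have k2 : x3 * x4 * ∏ d ∈ D, br d.1 d.2 ^ N d ∈ A :=
      hbump _ _ _ (fun d => le_max_right _ _) (hmul _ _ _ _ hx3 hx4)
    have hsum : (br s t : MvPolynomial (Fin (m' + 3) × Fin 2) k) * br p q
        * ∏ d ∈ D, br d.1 d.2 ^ N d ∈ A := by
      rw [hpl, add_mul]
      exact add_mem k1 k2
    refine ⟨fun d => N d + (if d = d0 then 1 else 0), ?_⟩
    have heq : (∏ d ∈ D, br d.1 d.2 ^ (N d + if d = d0 then 1 else 0) :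
        MvPolynomial (Fin (m' + 3) × Fin 2) k)
        = (∏ d ∈ D, br d.1 d.2 ^ N d) * br p q := by
      simp only [pow_add, Finset.prod_mul_distrib]
      congr 1
      have : (∏ d ∈ D, br d.1 d.2 ^ (if d = d0 then 1 else 0) :
          MvPolynomial (Fin (m' + 3) × Fin 2) k)
          = ∏ d ∈ D, (if d = d0 then br d.1 d.2 else 1) := by
        refine Finset.prod_congr rfl fun d _ => ?_
        split_ifs <;> simp
      rw [this, Finset.prod_ite_eq' D d0 (fun d => (br d.1 d.2 :
        MvPolynomial (Fin (m' + 3) × Fin 2) k)), if_pos hd0]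
    rw [heq]
    have hassoc : (br s t : MvPolynomial (Fin (m' + 3) × Fin 2) k)
        * ((∏ d ∈ D, br d.1 d.2 ^ N d) * br p q)
        = br s t * br p q * ∏ d ∈ D, br d.1 d.2 ^ N d := by ring
    rw [hassoc]
    exact hsum
  rcases hxd0 with ⟨h4, h5, h6⟩ | ⟨h4, h5, h6⟩
  · -- s < p < t < q
    obtain ⟨M1, hM1⟩ := hchild s p (by omega)
      (by intro x y hxy hnn hxc; simp only [XC] at hnn hxc ⊢; omega)
      (by simp only [XC]; omega)
    obtain ⟨M2, hM2⟩ := hchild t q (by omega)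
      (by intro x y hxy hnn hxc; simp only [XC] at hnn hxc ⊢; omega)
      (by simp only [XC]; omega)
    obtain ⟨M3, hM3⟩ := hchild s q (by omega)
      (by intro x y hxy hnn hxc; simp only [XC] at hnn hxc ⊢; omega)
      (by simp only [XC]; omega)
    obtain ⟨M4, hM4⟩ := hchild p t (by omega)
      (by intro x y hxy hnn hxc; simp only [XC] at hnn hxc ⊢; omega)
      (by simp only [XC]; omega)
    exact hfin _ _ _ _ M1 M2 M3 M4 (plucker s p t q) hM1 hM2 hM3 hM4
  · -- p < s < q < t
    obtain ⟨M1, hM1⟩ := hchild p s (by omega)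
      (by intro x y hxy hnn hxc; simp only [XC] at hnn hxc ⊢; omega)
      (by simp only [XC]; omega)
    obtain ⟨M2, hM2⟩ := hchild q t (by omega)
      (by intro x y hxy hnn hxc; simp only [XC] at hnn hxc ⊢; omega)
      (by simp only [XC]; omega)
    obtain ⟨M3, hM3⟩ := hchild p t (by omega)
      (by intro x y hxy hnn hxc; simp only [XC] at hnn hxc ⊢; omega)
      (by simp only [XC]; omega)
    obtain ⟨M4, hM4⟩ := hchild s q (by omega)
      (by intro x y hxy hnn hxc; simp only [XC] at hnn hxc ⊢; omega)
      (by simp only [XC]; omega)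
    exact hfin _ _ _ _ M1 M2 M3 M4 ((mul_comm _ _).trans (plucker p s q t)) hM1 hM2 hM3 hM4

/-- Laurent phenomenon for the Grassmannian bracket algebra: let `T` be a triangulation
of the convex `m`-gon (`m = m' + 3 ≥ 3`) with vertices `0, 1, …, m-1` in cyclic order,
given by a set `D` of `m - 3` pairwise non-crossing diagonals.  Then every bracket
`[s,t]` is a Laurent polynomial in the `2m - 3` brackets of the edges of the polygon and
the diagonals of `T`, with denominator a monomial in the diagonal brackets: there are
exponents `M` such that `[s,t] · ∏_{d ∈ D} [d]^{M d}` lies in the subalgebra generated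
by the edge and diagonal brackets. -/
theorem grassmannian_laurent_phenomenon {k : Type*} [Field k] (m' : ℕ)
    (D : Finset (Fin (m' + 3) × Fin (m' + 3)))
    (hcard : D.card = m')
    (hdiag : ∀ p ∈ D, (p.1 : ℕ) + 2 ≤ (p.2 : ℕ) ∧
      ¬((p.1 : ℕ) = 0 ∧ (p.2 : ℕ) = m' + 2))
    (hnc : ∀ p ∈ D, ∀ q ∈ D,
      ¬((p.1 < q.1 ∧ q.1 < p.2 ∧ p.2 < q.2) ∨ (q.1 < p.1 ∧ p.1 < q.2 ∧ q.2 < p.2))) :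
    ∀ s t : Fin (m' + 3), ∃ M : Fin (m' + 3) × Fin (m' + 3) → ℕ,
      (br s t : MvPolynomial (Fin (m' + 3) × Fin 2) k) * ∏ d ∈ D, br d.1 d.2 ^ M d ∈
        Algebra.adjoin k
          (({x | ∃ i : Fin (m' + 3), x = br i (i + 1)} ∪
            {x | ∃ d ∈ D, x = br d.1 d.2} :
            Set (MvPolynomial (Fin (m' + 3) × Fin 2) k))) := by
  intro s t
  rcases Nat.lt_trichotomy (s : ℕ) (t : ℕ) with h | h | h
  · exact key (k := k) m' D hcard hdiag hnc _ s t h rfl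
  · refine ⟨fun _ => 0, ?_⟩
    have hst : s = t := Fin.ext h
    subst hst
    simp only [br_self, zero_mul]
    exact zero_mem _
  · obtain ⟨M, hM⟩ := key (k := k) m' D hcard hdiag hnc _ t s h rfl
    refine ⟨M, ?_⟩
    rw [br_anti s t, neg_mul]
    exact neg_mem hM
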